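/- In the lower-bound graph with input edges, if S_A[i] = 0 or S_B[i] = 0, then the distance between ℓ'_i and r'_i is at most 4P + 2t + 2. -/

import Mathlib

/-! The lower-bound graph construction used to prove lower bounds for
`t`-round proof-labeling schemes for the diameter predicate.

The graph has base nodes `ℓ_0, …, ℓ_{k+1}`, `ℓ'_0, …, ℓ'_{k-1}`, `t_h`, `f_h`
(`h < log k`) on the left, and symmetric nodes on the right. Base nodes are
connected by paths (whose interior nodes are fresh): `P`-paths connect
`ℓ_i–ℓ'_i`, `ℓ_i–ℓ_k`, `ℓ_k–ℓ_{k+1}`, `ℓ_{k+1}–t_h`, `ℓ_{k+1}–f_h`, and `ℓ_i`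
to the nodes encoding its binary representation (`t_h` if bit `h` of `i` is 1,
`f_h` otherwise); symmetrically on the right. `(2t+1)`-paths connect `t_h–f'_h`,
`f_h–t'_h` and `ℓ_{k+1}–r_{k+1}`. Finally, the input edge `(ℓ_i, ℓ_{k+1})` is
present iff `S_A[i] = 0`, and `(r_i, r_{k+1})` iff `S_B[i] = 0`. -/

/-- The base (named) nodes of the construction. `L i` is `ℓ_i` for `i < k`,
`Lk` is `ℓ_k`, `Lk1` is `ℓ_{k+1}`, `L' i` is `ℓ'_i`, `Tl h` is `t_h`,
`Fl h` is `f_h`; similarly on the right. -/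
inductive LBBase (k lk : ℕ) : Type
  | L (i : Fin k) | L' (i : Fin k) | Lk | Lk1 | Tl (h : Fin lk) | Fl (h : Fin lk)
  | R (i : Fin k) | R' (i : Fin k) | Rk | Rk1 | Tr (h : Fin lk) | Fr (h : Fin lk)

/-- Names for the connecting paths (and the two families of input edges). -/
inductive LBEdge (k lk : ℕ) : Type
  | ll' (i : Fin k) | llk (i : Fin k) | lklk1
  | lk1t (h : Fin lk) | lk1f (h : Fin lk) | lenc (i : Fin k) (h : Fin lk)
  | rr' (i : Fin k) | rrk (i : Fin k) | rkrk1
  | rk1t (h : Fin lk) | rk1f (h : Fin lk) | renc (i : Fin k) (h : Fin lk)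
  | cr1 (h : Fin lk) | cr2 (h : Fin lk) | crC
  | inA (i : Fin k) | inB (i : Fin k)

namespace LB

variable {k lk : ℕ}

/-- The two endpoints of each connecting path. -/
def ends : LBEdge k lk → LBBase k lk × LBBase k lk
  | .ll' i => (.L i, .L' i)
  | .llk i => (.L i, .Lk)
  | .lklk1 => (.Lk, .Lk1)
  | .lk1t h => (.Lk1, .Tl h)
  | .lk1f h => (.Lk1, .Fl h)
  | .lenc i h => (.L i, if Nat.testBit i.val h.val then .Tl h else .Fl h)
  | .rr' i => (.R i, .R' i)
  | .rrk i => (.R i, .Rk)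
  | .rkrk1 => (.Rk, .Rk1)
  | .rk1t h => (.Rk1, .Tr h)
  | .rk1f h => (.Rk1, .Fr h)
  | .renc i h => (.R i, if Nat.testBit i.val h.val then .Tr h else .Fr h)
  | .cr1 h => (.Tl h, .Fr h)
  | .cr2 h => (.Fl h, .Tr h)
  | .crC => (.Lk1, .Rk1)
  | .inA i => (.L i, .Lk1)
  | .inB i => (.R i, .Rk1)

/-- The number of edges of each connecting path: `2t+1` for the three
cross families, `1` for the input edges, and `P` for all others. -/
def elen (P t : ℕ) : LBEdge k lk → ℕ
  | .cr1 _ => 2 * t + 1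
  | .cr2 _ => 2 * t + 1
  | .crC => 2 * t + 1
  | .inA _ => 1
  | .inB _ => 1
  | _ => P

/-- Which connecting paths are present: all of them, except that the input edge
`(ℓ_i, ℓ_{k+1})` is present iff `S_A[i] = 0`, and `(r_i, r_{k+1})` iff `S_B[i] = 0`. -/
def active (SA SB : Fin k → Bool) : LBEdge k lk → Prop
  | .inA i => SA i = false
  | .inB i => SB i = false
  | _ => True

/-- The vertices of the lower-bound graph: base nodes, plus the interior
nodes of the connecting paths (a path with `m` edges has `m - 1` interior
nodes, numbered consecutively from its first endpoint). -/
def Vtx (k lk P t : ℕ) : Type :=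
  LBBase k lk ⊕ (Σ e : LBEdge k lk, Fin (elen P t e - 1))

/-- One direction of the adjacency relation of the lower-bound graph. -/
def Rel (k lk P t : ℕ) (SA SB : Fin k → Bool) : Vtx k lk P t → Vtx k lk P t → Prop :=
  fun x y =>
    (∃ e : LBEdge k lk, active SA SB e ∧ elen P t e = 1 ∧
        x = Sum.inl (ends e).1 ∧ y = Sum.inl (ends e).2) ∨
    (∃ (e : LBEdge k lk) (j : Fin (elen P t e - 1)), active SA SB e ∧
        x = Sum.inl (ends e).1 ∧ y = Sum.inr ⟨e, j⟩ ∧ j.val = 0) ∨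
    (∃ (e : LBEdge k lk) (j : Fin (elen P t e - 1)), active SA SB e ∧
        x = Sum.inr ⟨e, j⟩ ∧ y = Sum.inl (ends e).2 ∧ j.val + 2 = elen P t e) ∨
    (∃ (e : LBEdge k lk) (j j' : Fin (elen P t e - 1)), active SA SB e ∧
        x = Sum.inr ⟨e, j⟩ ∧ y = Sum.inr ⟨e, j'⟩ ∧ j'.val = j.val + 1)

/-- The lower-bound graph. -/
def graph (k lk P t : ℕ) (SA SB : Fin k → Bool) : SimpleGraph (Vtx k lk P t) :=
  SimpleGraph.fromRel (Rel k lk P t SA SB)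

lemma ends_ne (e : LBEdge k lk) : (ends e).1 ≠ (ends e).2 := by
  cases e <;> simp only [ends] <;> (try split) <;> simp

variable {P t : ℕ} {SA SB : Fin k → Bool}

lemma exists_walk (e : LBEdge k lk) (he : active SA SB e) (hm : 1 ≤ elen P t e) :
    ∃ w : (graph k lk P t SA SB).Walk (Sum.inl (ends e).1) (Sum.inl (ends e).2),
      w.length = elen P t e := by
  classical
  by_cases h1 : elen P t e = 1
  · have hadj : (graph k lk P t SA SB).Adj (Sum.inl (ends e).1) (Sum.inl (ends e).2) := by
      refine ⟨fun hc => ends_ne e (Sum.inl.inj hc), Or.inl ?_⟩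
      exact Or.inl ⟨e, he, h1, rfl, rfl⟩
    exact ⟨hadj.toWalk, h1.symm⟩
  · have hm2 : 2 ≤ elen P t e := by omega
    set m := elen P t e with hmdef
    have key : ∀ jv (hj : jv < m - 1),
        ∃ w : (graph k lk P t SA SB).Walk (Sum.inl (ends e).1)
            (Sum.inr ⟨e, ⟨jv, hj⟩⟩), w.length = jv + 1 := by
      intro jv
      induction jv with
      | zero =>
        intro hj
        have hadj : (graph k lk P t SA SB).Adj (Sum.inl (ends e).1)
            (Sum.inr ⟨e, ⟨0, hj⟩⟩) := by
          exact ⟨Sum.inl_ne_inr, Or.inl (Or.inr (Or.inl ⟨e, ⟨0, hj⟩, he, rfl, rfl, rfl⟩))⟩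
        exact ⟨hadj.toWalk, rfl⟩
      | succ n ih =>
        intro hj
        have hn : n < m - 1 := by omega
        obtain ⟨w, hw⟩ := ih hn
        have hadj : (graph k lk P t SA SB).Adj (Sum.inr ⟨e, ⟨n, hn⟩⟩)
            (Sum.inr ⟨e, ⟨n + 1, hj⟩⟩) := by
          refine ⟨?_, Or.inl (Or.inr (Or.inr (Or.inr
            ⟨e, ⟨n, hn⟩, ⟨n + 1, hj⟩, he, rfl, rfl, rfl⟩)))⟩
          intro hcontra
          have := congrArg (fun x => match x with
            | Sum.inr ⟨_, j⟩ => j.val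
            | Sum.inl _ => 0) hcontra
          simp at this
        exact ⟨w.concat hadj, by have := SimpleGraph.Walk.length_concat w hadj; omega⟩
    obtain ⟨w, hw⟩ := key (m - 2) (by omega)
    have hadj : (graph k lk P t SA SB).Adj (Sum.inr ⟨e, ⟨m - 2, by omega⟩⟩)
        (Sum.inl (ends e).2) := by
      exact ⟨Sum.inr_ne_inl, Or.inl (Or.inr (Or.inr (Or.inl
        ⟨e, ⟨m - 2, by omega⟩, he, rfl, rfl, by show m - 2 + 2 = elen P t e; omega⟩)))⟩
    exact ⟨w.concat hadj, by have := SimpleGraph.Walk.length_concat w hadj; omega⟩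

end LB

/-- In the lower-bound graph with input edges, if
`S_A[i] = 0` or `S_B[i] = 0`, then the distance between `ℓ'_i` and `r'_i`
is at most `4P + 2t + 2`. -/
theorem stmt11 (k lk P t : ℕ) (hk : k = 2 ^ lk) (hP : 1 ≤ P) (ht : 1 ≤ t)
    (SA SB : Fin k → Bool) (i : Fin k) (hi : SA i = false ∨ SB i = false) :
    (LB.graph k lk P t SA SB).dist
        (Sum.inl (LBBase.L' i)) (Sum.inl (LBBase.R' i)) ≤ 4 * P + 2 * t + 2 := by
  rcases hi with hA | hB
  · obtain ⟨w1, h1⟩ := LB.exists_walk (P := P) (t := t) (SA := SA) (SB := SB)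
      (.ll' i) trivial hP
    obtain ⟨w2, h2⟩ := LB.exists_walk (P := P) (t := t) (SA := SA) (SB := SB)
      (.inA i) hA le_rfl
    obtain ⟨w3, h3⟩ := LB.exists_walk (P := P) (t := t) (SA := SA) (SB := SB)
      .crC trivial (by simp [LB.elen])
    obtain ⟨w4, h4⟩ := LB.exists_walk (P := P) (t := t) (SA := SA) (SB := SB)
      .rkrk1 trivial hP
    obtain ⟨w5, h5⟩ := LB.exists_walk (P := P) (t := t) (SA := SA) (SB := SB)
      (.rrk i) trivial hP
    obtain ⟨w6, h6⟩ := LB.exists_walk (P := P) (t := t) (SA := SA) (SB := SB)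
      (.rr' i) trivial hP
    refine le_trans (SimpleGraph.dist_le (w1.reverse.append (w2.append (w3.append
      (w4.reverse.append (w5.reverse.append w6)))))) ?_
    simp only [LB.elen] at h1 h2 h3 h4 h5 h6
    have a5 : (w5.reverse.append w6).length = w5.reverse.length + w6.length := SimpleGraph.Walk.length_append _ _
    have a4 : (w4.reverse.append (w5.reverse.append w6)).length = w4.reverse.length + (w5.reverse.append w6).length := SimpleGraph.Walk.length_append _ _
    have a3 : (w3.append (w4.reverse.append (w5.reverse.append w6))).length = w3.length + (w4.reverse.append (w5.reverse.append w6)).length := SimpleGraph.Walk.length_append _ _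
    have a2 : (w2.append (w3.append (w4.reverse.append (w5.reverse.append w6)))).length = w2.length + (w3.append (w4.reverse.append (w5.reverse.append w6))).length := SimpleGraph.Walk.length_append _ _
    have a1 : (w1.reverse.append (w2.append (w3.append (w4.reverse.append (w5.reverse.append w6))))).length = w1.reverse.length + (w2.append (w3.append (w4.reverse.append (w5.reverse.append w6)))).length := SimpleGraph.Walk.length_append _ _
    have r1 : w1.reverse.length = w1.length := SimpleGraph.Walk.length_reverse _
    have r5 : w5.reverse.length = w5.length := SimpleGraph.Walk.length_reverse _
    have r4 : w4.reverse.length = w4.length := SimpleGraph.Walk.length_reverse _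
    have g1 : w1.length = P := h1
    have g2 : w2.length = 1 := h2
    have g3 : w3.length = 2 * t + 1 := h3
    have g4 : w4.length = P := h4
    have g5 : w5.length = P := h5
    have g6 : w6.length = P := h6
    omega
  · obtain ⟨w1, h1⟩ := LB.exists_walk (P := P) (t := t) (SA := SA) (SB := SB)
      (.ll' i) trivial hP
    obtain ⟨w2, h2⟩ := LB.exists_walk (P := P) (t := t) (SA := SA) (SB := SB)
      (.llk i) trivial hP
    obtain ⟨w3, h3⟩ := LB.exists_walk (P := P) (t := t) (SA := SA) (SB := SB)
      .lklk1 trivial hP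
    obtain ⟨w4, h4⟩ := LB.exists_walk (P := P) (t := t) (SA := SA) (SB := SB)
      .crC trivial (by simp [LB.elen])
    obtain ⟨w5, h5⟩ := LB.exists_walk (P := P) (t := t) (SA := SA) (SB := SB)
      (.inB i) hB le_rfl
    obtain ⟨w6, h6⟩ := LB.exists_walk (P := P) (t := t) (SA := SA) (SB := SB)
      (.rr' i) trivial hP
    refine le_trans (SimpleGraph.dist_le (w1.reverse.append (w2.append (w3.append
      (w4.append (w5.reverse.append w6)))))) ?_
    simp only [LB.elen] at h1 h2 h3 h4 h5 h6
    have a5 : (w5.reverse.append w6).length = w5.reverse.length + w6.length := SimpleGraph.Walk.length_append _ _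
    have a4 : (w4.append (w5.reverse.append w6)).length = w4.length + (w5.reverse.append w6).length := SimpleGraph.Walk.length_append _ _
    have a3 : (w3.append (w4.append (w5.reverse.append w6))).length = w3.length + (w4.append (w5.reverse.append w6)).length := SimpleGraph.Walk.length_append _ _
    have a2 : (w2.append (w3.append (w4.append (w5.reverse.append w6)))).length = w2.length + (w3.append (w4.append (w5.reverse.append w6))).length := SimpleGraph.Walk.length_append _ _
    have a1 : (w1.reverse.append (w2.append (w3.append (w4.append (w5.reverse.append w6))))).length = w1.reverse.length + (w2.append (w3.append (w4.append (w5.reverse.append w6)))).length := SimpleGraph.Walk.length_append _ _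
    have r1 : w1.reverse.length = w1.length := SimpleGraph.Walk.length_reverse _
    have r5 : w5.reverse.length = w5.length := SimpleGraph.Walk.length_reverse _
    have g1 : w1.length = P := h1
    have g2 : w2.length = P := h2
    have g3 : w3.length = P := h3
    have g4 : w4.length = 2 * t + 1 := h4
    have g5 : w5.length = 1 := h5
    have g6 : w6.length = P := h6
    omega
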